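/- Global structure of the Weber function with small frequency: under the stated hypotheses, there exists a unique x* ∈ ℝ with W'(x*) = 0; moreover −√λ < x* < √λ, W'(x) > 0 for all x < x*, and W'(x) < 0 for all x > x* (so W attains its global maximum at x*). -/

import Mathlib

open Filter Real

/-- Beyond any point, the derivative of a function tending to `-∞` is somewhere negative. -/
lemma weber_exists_deriv_neg (W : ℝ → ℝ) (hW1 : Differentiable ℝ W)
    (hWtop : Tendsto W atTop atBot) (a : ℝ) : ∃ c > a, deriv W c < 0 := by
  obtain ⟨b, hb1, hb2⟩ : ∃ b, W b < W a ∧ a < b := by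
    have h := (hWtop.eventually (eventually_lt_atBot (W a))).and (eventually_gt_atTop a)
    exact h.exists
  obtain ⟨c, hc, hc'⟩ := exists_deriv_eq_slope W hb2 (hW1.continuous.continuousOn)
    (hW1.differentiableOn)
  refine ⟨c, hc.1, ?_⟩
  rw [hc']
  exact div_neg_of_neg_of_pos (by linarith) (by linarith)

/-- Invariance: a Weber solution cannot have `W > 0`, `W' ≥ 0` at a point to the right of `√λ`
while tending to `-∞`. -/
lemma weber_inv (lam : ℝ) (hlam0 : 0 < lam) (W : ℝ → ℝ)
    (hW1 : Differentiable ℝ W) (hW2 : Differentiable ℝ (deriv W))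
    (hWeq : ∀ x, deriv (deriv W) x = (x ^ 2 - lam) * W x)
    (hWtop : Tendsto W atTop atBot)
    (a : ℝ) (ha : Real.sqrt lam ≤ a) (hWa : 0 < W a) (hW'a : 0 ≤ deriv W a) : False := by
  have hW'cont : Continuous (deriv W) := hW2.continuous
  obtain ⟨c, hca, hc⟩ := weber_exists_deriv_neg W hW1 hWtop a
  set B : Set ℝ := {x | a ≤ x ∧ deriv W x < 0} with hB
  have hBne : B.Nonempty := ⟨c, le_of_lt hca, hc⟩
  have hBbd : BddBelow B := ⟨a, fun x hx => hx.1⟩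
  set z := sInf B with hz
  have haz : a ≤ z := le_csInf hBne fun x hx => hx.1
  have hzc : z ∈ closure B := csInf_mem_closure hBne hBbd
  have hzle : deriv W z ≤ 0 := by
    have hcl : closure B ⊆ {x | deriv W x ≤ 0} :=
      closure_minimal (fun x hx => le_of_lt hx.2) (isClosed_le hW'cont continuous_const)
    exact hcl hzc
  have hIco : ∀ x ∈ Set.Ico a z, 0 ≤ deriv W x := by
    intro x hx
    by_contra h
    push_neg at h
    exact absurd (csInf_le hBbd ⟨hx.1, h⟩) (not_le.2 hx.2)
  have hge : 0 ≤ deriv W z := by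
    rcases eq_or_lt_of_le haz with h | h
    · exact h ▸ hW'a
    · have h1 : z ∈ closure (Set.Ico a z) := by
        rw [closure_Ico (ne_of_lt h)]
        exact Set.right_mem_Icc.2 (le_of_lt h)
      have h2 : closure (Set.Ico a z) ⊆ {x | 0 ≤ deriv W x} :=
        closure_minimal hIco (isClosed_le continuous_const hW'cont)
      exact h2 h1
  have hW'z : deriv W z = 0 := le_antisymm hzle hge
  have hWz : 0 < W z := by
    rcases eq_or_lt_of_le haz with h | h
    · exact h ▸ hWa
    · have hmono : MonotoneOn W (Set.Icc a z) := by
        refine monotoneOn_of_deriv_nonneg (convex_Icc a z) hW1.continuous.continuousOn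
          (hW1.differentiableOn) ?_
        intro x hx
        rw [interior_Icc] at hx
        exact hIco x ⟨le_of_lt hx.1, hx.2⟩
      exact lt_of_lt_of_le hWa (hmono (Set.left_mem_Icc.2 haz) (Set.right_mem_Icc.2 haz) haz)
  -- continuity of W at z: positivity nearby
  obtain ⟨δ, hδ0, hδ⟩ : ∃ δ > 0, ∀ ⦃x : ℝ⦄, dist x z < δ → 0 < W x := by
    have hev : ∀ᶠ x in nhds z, 0 < W x :=
      hW1.continuous.continuousAt.eventually (eventually_gt_nhds hWz)
    exact Metric.eventually_nhds_iff.mp hev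
  set δ' := δ / 2 with hδ'
  have hδ'0 : 0 < δ' := half_pos hδ0
  have hsz : 0 ≤ Real.sqrt lam := Real.sqrt_nonneg lam
  have hstrict : StrictMonoOn (deriv W) (Set.Icc z (z + δ')) := by
    refine strictMonoOn_of_deriv_pos (convex_Icc _ _) hW'cont.continuousOn ?_
    intro x hx
    rw [interior_Icc] at hx
    rw [hWeq]
    have hxz : z < x := hx.1
    have hWx : 0 < W x := hδ (by
      rw [Real.dist_eq, abs_of_pos (by linarith : (0:ℝ) < x - z)]
      linarith [hx.2])
    have hx2 : lam < x ^ 2 := by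
      have : Real.sqrt lam ^ 2 < x ^ 2 := sq_lt_sq' (by nlinarith) (by linarith)
      rwa [Real.sq_sqrt hlam0.le] at this
    exact mul_pos (by linarith) hWx
  obtain ⟨w, hwB, hwd⟩ := Metric.mem_closure_iff.mp hzc δ' hδ'0
  have hzw : z ≤ w := csInf_le hBbd hwB
  have hwz : z < w := lt_of_le_of_ne hzw (by
    intro h; rw [← h] at hwB; exact absurd hW'z (ne_of_lt hwB.2))
  have hwlt : w ≤ z + δ' := by
    rw [Real.dist_eq, abs_of_nonpos (by linarith : z - w ≤ 0)] at hwd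
    linarith
  have := hstrict (Set.left_mem_Icc.2 (by linarith)) ⟨hzw, hwlt⟩ hwz
  rw [hW'z] at this
  exact absurd hwB.2 (not_lt.2 (le_of_lt this))

set_option maxHeartbeats 2000000 in
/-- Global structure of the Weber function with small frequency: it has a unique
critical point `x*`, lying in `(-√λ, √λ)`, with `W' > 0` to the left of `x*` and
`W' < 0` to the right of `x*`. -/
theorem weber_global_structure
    (lam : ℝ) (hlam1 : 1 < lam) (hlam2 : lam < 2)
    (W : ℝ → ℝ) (hW : ContDiff ℝ 2 W)
    (hWeq : ∀ x, deriv (deriv W) x = (x ^ 2 - lam) * W x)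
    (hWpos : ∀ x ≤ (3 : ℝ), 0 < W x)
    (hWbot : Tendsto W atBot (nhds 0))
    (hWtop : Tendsto W atTop atBot) :
    ∃ xs : ℝ, deriv W xs = 0 ∧
      (∀ y : ℝ, deriv W y = 0 → y = xs) ∧
      -Real.sqrt lam < xs ∧ xs < Real.sqrt lam ∧
      (∀ x < xs, 0 < deriv W x) ∧
      (∀ x > xs, deriv W x < 0) := by
  have hlam0 : 0 < lam := by linarith
  have hW1 : Differentiable ℝ W := hW.differentiable (by norm_num)
  have hW2 : Differentiable ℝ (deriv W) := by
    have h : ContDiff ℝ ((1:ℕ) + 1) W := by norm_num; exact_mod_cast hW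
    exact ((contDiff_succ_iff_deriv.mp h).2.2).differentiable (by norm_num)
  have hW'cont : Continuous (deriv W) := hW2.continuous
  set s := Real.sqrt lam with hsdef
  have hs0 : 0 < s := Real.sqrt_pos.2 hlam0
  have hs1 : 1 < s := by
    rw [hsdef, show (1:ℝ) = Real.sqrt 1 by simp]
    exact Real.sqrt_lt_sqrt (by norm_num) hlam1
  have hs3 : s < 3 := by
    rw [hsdef]
    rw [Real.sqrt_lt' (by norm_num)]
    nlinarith
  have hsq : s ^ 2 = lam := Real.sq_sqrt hlam0.le
  -- Step A: W' > 0 on (-∞, -s]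
  have stepA : ∀ x ≤ -s, 0 < deriv W x := by
    intro x₀ hx₀
    by_contra h
    push_neg at h
    -- W'' ≥ 0 on Iic x₀, so W' monotone there
    have hmono' : MonotoneOn (deriv W) (Set.Iic x₀) := by
      refine monotoneOn_of_deriv_nonneg (convex_Iic x₀) hW'cont.continuousOn
        hW2.differentiableOn ?_
      intro x hx
      rw [interior_Iic] at hx
      rw [hWeq]
      have hx3 : x < -s := lt_of_lt_of_le hx hx₀
      have : lam ≤ x ^ 2 := by nlinarith
      exact mul_nonneg (by linarith) (le_of_lt (hWpos x (by linarith)))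
    have hanti : AntitoneOn W (Set.Iic x₀) := by
      refine antitoneOn_of_deriv_nonpos (convex_Iic x₀) hW1.continuous.continuousOn
        hW1.differentiableOn ?_
      intro x hx
      rw [interior_Iic] at hx
      exact le_trans (hmono' (le_of_lt hx : x ≤ x₀) Set.self_mem_Iic (le_of_lt hx)) h
    have hWx₀ : 0 < W x₀ := hWpos x₀ (by linarith)
    have hev := (hWbot.eventually (eventually_lt_nhds hWx₀)).and (eventually_le_atBot x₀)
    obtain ⟨b, hb1, hb2⟩ := hev.exists
    have hW := hanti hb2 Set.self_mem_Iic hb2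
    linarith
  -- set of zeros candidates
  obtain ⟨c, hcms, hcneg⟩ := weber_exists_deriv_neg W hW1 hWtop (-s)
  set A : Set ℝ := {x | deriv W x ≤ 0} with hA
  have hAcl : IsClosed A := isClosed_le hW'cont continuous_const
  have hAne : A.Nonempty := ⟨c, le_of_lt hcneg⟩
  have hAbd : BddBelow A := by
    refine ⟨-s, fun x hx => ?_⟩
    by_contra h
    push_neg at h
    exact absurd hx (not_le.2 (stepA x (le_of_lt h)))
  set xs := sInf A with hxs
  have hxsA : xs ∈ A := hAcl.csInf_mem hAne hAbd
  have hleft : ∀ x < xs, 0 < deriv W x := by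
    intro x hx
    by_contra h
    push_neg at h
    exact absurd (csInf_le hAbd h) (not_le.2 hx)
  have hxs0 : deriv W xs = 0 := by
    refine le_antisymm hxsA ?_
    by_contra h
    push_neg at h
    obtain ⟨δ, hδ0, hδ⟩ : ∃ δ > 0, ∀ ⦃x : ℝ⦄, dist x xs < δ → deriv W x < 0 :=
      Metric.eventually_nhds_iff.mp (hW'cont.continuousAt.eventually (eventually_lt_nhds h))
    have : deriv W (xs - δ/2) < 0 := hδ (by rw [Real.dist_eq]; rw [abs_of_nonpos] <;> linarith)
    exact absurd (csInf_le hAbd (le_of_lt this)) (by linarith)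
  have hxs_gt : -s < xs := by
    by_contra h
    push_neg at h
    exact absurd hxs0 (ne_of_gt (stepA xs h))
  have hxs_lt : xs < s := by
    by_contra h
    push_neg at h
    -- W(xs) > 0 since W is monotone up to xs and positive below 3
    have hmono : MonotoneOn W (Set.Iic xs) := by
      refine monotoneOn_of_deriv_nonneg (convex_Iic xs) hW1.continuous.continuousOn
        hW1.differentiableOn ?_
      intro x hx
      rw [interior_Iic] at hx
      exact le_of_lt (hleft x hx)
    have hWxs : 0 < W xs := by
      rcases le_or_gt xs 3 with h3 | h3
      · exact hWpos xs h3
      · exact lt_of_lt_of_le (hWpos 3 le_rfl) (hmono (Set.mem_Iic.2 (le_of_lt h3)) Set.self_mem_Iic (le_of_lt h3))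
    exact weber_inv lam hlam0 W hW1 hW2 hWeq hWtop xs h hWxs (le_of_eq hxs0.symm)
  have hWxs : 0 < W xs := hWpos xs (by linarith)
  -- Step: W' < 0 to the right of xs
  have hright : ∀ x > xs, deriv W x < 0 := by
    intro y hy
    by_contra hyc
    push_neg at hyc
    set C : Set ℝ := {x | xs < x ∧ 0 ≤ deriv W x} with hC
    have hCne : C.Nonempty := ⟨y, hy, hyc⟩
    have hCbd : BddBelow C := ⟨xs, fun x hx => le_of_lt hx.1⟩
    set z := sInf C with hzdef
    have hxz : xs ≤ z := le_csInf hCne fun x hx => le_of_lt hx.1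
    have hzc : z ∈ closure C := csInf_mem_closure hCne hCbd
    have hW'zge : 0 ≤ deriv W z := by
      have hcl : closure C ⊆ {x | 0 ≤ deriv W x} :=
        closure_minimal (fun x hx => hx.2) (isClosed_le continuous_const hW'cont)
      exact hcl hzc
    -- W'' (xs) < 0, so W' < 0 just right of xs, so z > xs
    have hW''xs : deriv (deriv W) xs < 0 := by
      rw [hWeq]
      have : xs ^ 2 < lam := by
        have := sq_lt_sq' hxs_gt hxs_lt
        rwa [hsq] at this
      exact mul_neg_of_neg_of_pos (by linarith) hWxs
    have hW''cont : Continuous (deriv (deriv W)) := by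
      have : deriv (deriv W) = fun x => (x ^ 2 - lam) * W x := funext hWeq
      rw [this]; fun_prop
    have hzgt : xs < z := by
      obtain ⟨δ, hδ0, hδ⟩ : ∃ δ > 0, ∀ ⦃x : ℝ⦄, dist x xs < δ → deriv (deriv W) x < 0 :=
        Metric.eventually_nhds_iff.mp (hW''cont.continuousAt.eventually (eventually_lt_nhds hW''xs))
      have hanti : StrictAntiOn (deriv W) (Set.Icc xs (xs + δ/2)) := by
        refine strictAntiOn_of_deriv_neg (convex_Icc _ _) hW'cont.continuousOn ?_
        intro x hx
        rw [interior_Icc] at hx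
        exact hδ (by rw [Real.dist_eq, abs_of_pos (by linarith [hx.1])]; linarith [hx.2])
      have hCbd' : ∀ x ∈ C, xs + δ/2 ≤ x := by
        intro x hx
        by_contra hcon
        push_neg at hcon
        have := hanti (Set.left_mem_Icc.2 (by linarith)) ⟨le_of_lt hx.1, le_of_lt hcon⟩ hx.1
        rw [hxs0] at this
        exact absurd hx.2 (not_le.2 this)
      have := le_csInf hCne hCbd'
      linarith
    have hIooneg : ∀ x ∈ Set.Ioo xs z, deriv W x < 0 := by
      intro x hx
      by_contra hcon
      push_neg at hcon
      exact absurd (csInf_le hCbd ⟨hx.1, hcon⟩) (not_le.2 hx.2)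
    have hW'z : deriv W z = 0 := by
      refine le_antisymm ?_ hW'zge
      have h1 : z ∈ closure (Set.Ioo xs z) := by
        rw [closure_Ioo (ne_of_lt hzgt)]
        exact Set.right_mem_Icc.2 (le_of_lt hzgt)
      exact closure_minimal (fun x hx => le_of_lt (hIooneg x hx))
        (isClosed_le hW'cont continuous_const) h1
    have hantiW : StrictAntiOn W (Set.Icc xs z) := by
      refine strictAntiOn_of_deriv_neg (convex_Icc _ _) hW1.continuous.continuousOn ?_
      intro x hx
      rw [interior_Icc] at hx
      exact hIooneg x hx
    rcases lt_trichotomy 0 (W z) with hWz | hWz | hWz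
    · -- W z > 0
      rcases le_or_gt s z with hsz | hsz
      · exact weber_inv lam hlam0 W hW1 hW2 hWeq hWtop z hsz hWz hW'zge
      · -- z < s : W''(z) < 0, local contradiction
        have hW''z : deriv (deriv W) z < 0 := by
          rw [hWeq]
          have : z ^ 2 < lam := by
            have := sq_lt_sq' (by linarith : -s < z) hsz
            rwa [hsq] at this
          exact mul_neg_of_neg_of_pos (by linarith) hWz
        obtain ⟨δ, hδ0, hδ⟩ : ∃ δ > 0, ∀ ⦃x : ℝ⦄, dist x z < δ → deriv (deriv W) x < 0 :=
          Metric.eventually_nhds_iff.mp (hW''cont.continuousAt.eventually (eventually_lt_nhds hW''z))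
        set p := z - min δ (z - xs) / 2 with hp
        have hmin0 : 0 < min δ (z - xs) := lt_min hδ0 (by linarith)
        have hpz : p < z := by rw [hp]; linarith
        have hpxs : xs < p := by
          have : min δ (z - xs) ≤ z - xs := min_le_right _ _
          rw [hp]; linarith
        have hanti : StrictAntiOn (deriv W) (Set.Icc p z) := by
          refine strictAntiOn_of_deriv_neg (convex_Icc _ _) hW'cont.continuousOn ?_
          intro x hx
          rw [interior_Icc] at hx
          refine hδ ?_
          rw [Real.dist_eq, abs_of_nonpos (by linarith [hx.2])]
          have : min δ (z - xs) ≤ δ := min_le_left _ _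
          have hxp := hx.1
          rw [hp] at hxp
          linarith
        have := hanti (Set.left_mem_Icc.2 (le_of_lt hpz)) (Set.right_mem_Icc.2 (le_of_lt hpz)) hpz
        rw [hW'z] at this
        exact absurd (hIooneg p ⟨hpxs, hpz⟩) (not_lt.2 (le_of_lt this))
    · -- W z = 0 : Gronwall-type argument
      have hz3 : 3 < z := by
        by_contra h3
        push_neg at h3
        exact absurd hWz.symm (ne_of_gt (hWpos z h3))
      set p := (xs + z) / 2 with hp
      have hpxs : xs < p := by rw [hp]; linarith
      have hpz : p < z := by rw [hp]; linarith
      have hWp : 0 < W p := by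
        have h' : W z < W p := hantiW (Set.mem_Icc.2 ⟨le_of_lt hpxs, le_of_lt hpz⟩)
          (Set.right_mem_Icc.2 (by linarith)) hpz
        rw [← hWz] at h'
        exact h'
      set K : ℝ := 1 + z ^ 2 + lam with hK
      have hKpos : 0 < K := by positivity
      set u : ℝ → ℝ := fun x => W x ^ 2 + deriv W x ^ 2 with hu
      set g : ℝ → ℝ := fun x => Real.exp (K * x) * u x with hg
      have hgderiv : ∀ x : ℝ, HasDerivAt g
          (Real.exp (K * x) * (K * u x + 2 * W x * deriv W x * (1 + x ^ 2 - lam))) x := by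
        intro x
        have h1 : HasDerivAt W (deriv W x) x := hW1.differentiableAt.hasDerivAt
        have h2 : HasDerivAt (deriv W) ((x ^ 2 - lam) * W x) x := by
          have := hW2.differentiableAt.hasDerivAt (x := x)
          rwa [hWeq x] at this
        have hu' : HasDerivAt u
            (2 * W x * deriv W x + 2 * deriv W x * ((x ^ 2 - lam) * W x)) x := by
          have ha := h1.pow 2
          have hb := h2.pow 2
          have := ha.add hb
          simp only [Nat.cast_ofNat, pow_one] at this
          refine this.congr_deriv ?_
          ring
        have hexp : HasDerivAt (fun x => Real.exp (K * x)) (Real.exp (K * x) * K) x := by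
          have := ((hasDerivAt_id x).const_mul K).exp
          simpa using this
        have := hexp.mul hu'
        refine this.congr_deriv ?_
        simp only [hu]
        ring
      have hgmono : MonotoneOn g (Set.Icc p z) := by
        refine monotoneOn_of_deriv_nonneg (convex_Icc _ _)
          (Continuous.continuousOn (by rw [hg, hu]; fun_prop)) ?_ ?_
        · intro x hx
          exact ((hgderiv x).differentiableAt).differentiableWithinAt
        · intro x hx
          rw [interior_Icc] at hx
          rw [(hgderiv x).deriv]
          have hexp0 : 0 < Real.exp (K * x) := Real.exp_pos _
          refine mul_nonneg (le_of_lt hexp0) ?_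
          set a := W x
          set b := deriv W x
          set t := 1 + x ^ 2 - lam with ht
          have hx0 : 0 < x := by
            have := hx.1
            rw [hp] at this
            nlinarith [hxs_gt, hs0, hs3]
          have hxz' : x < z := hx.2
          have htK : t ≤ K := by rw [ht, hK]; nlinarith
          have htK' : -K ≤ t := by rw [ht, hK]; nlinarith
          have h1 : 0 ≤ (K - t) * (a + b) ^ 2 := mul_nonneg (by linarith) (sq_nonneg _)
          have h2 : 0 ≤ (K + t) * (a - b) ^ 2 := mul_nonneg (by linarith) (sq_nonneg _)
          have : u x = a ^ 2 + b ^ 2 := rfl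
          rw [this]
          nlinarith [h1, h2]
      have hgz : g z = 0 := by
        rw [hg, hu]
        simp only
        rw [← hWz, hW'z]
        ring
      have hgp : 0 < g p := by
        have h1 : 0 < W p ^ 2 + deriv W p ^ 2 :=
          add_pos_of_pos_of_nonneg (pow_pos hWp 2) (sq_nonneg _)
        exact mul_pos (Real.exp_pos _) h1
      have := hgmono (Set.left_mem_Icc.2 (le_of_lt hpz)) (Set.right_mem_Icc.2 (le_of_lt hpz))
        (le_of_lt hpz)
      rw [hgz] at this
      linarith
    · -- W z < 0 : then z > 3 > s, W''(z) < 0, local contradiction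
      have hz3 : 3 < z := by
        by_contra h3
        push_neg at h3
        exact absurd hWz (not_lt.2 (le_of_lt (hWpos z h3)))
      have hW''z : deriv (deriv W) z < 0 := by
        rw [hWeq]
        exact mul_neg_of_pos_of_neg (by nlinarith) hWz
      obtain ⟨δ, hδ0, hδ⟩ : ∃ δ > 0, ∀ ⦃x : ℝ⦄, dist x z < δ → deriv (deriv W) x < 0 :=
        Metric.eventually_nhds_iff.mp (hW''cont.continuousAt.eventually (eventually_lt_nhds hW''z))
      set p := z - min δ (z - xs) / 2 with hp
      have hmin0 : 0 < min δ (z - xs) := lt_min hδ0 (by linarith)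
      have hpz : p < z := by rw [hp]; linarith
      have hpxs : xs < p := by
        have : min δ (z - xs) ≤ z - xs := min_le_right _ _
        rw [hp]; linarith
      have hanti : StrictAntiOn (deriv W) (Set.Icc p z) := by
        refine strictAntiOn_of_deriv_neg (convex_Icc _ _) hW'cont.continuousOn ?_
        intro x hx
        rw [interior_Icc] at hx
        refine hδ ?_
        rw [Real.dist_eq, abs_of_nonpos (by linarith [hx.2])]
        have : min δ (z - xs) ≤ δ := min_le_left _ _
        have hxp := hx.1
        rw [hp] at hxp
        linarith
      have := hanti (Set.left_mem_Icc.2 (le_of_lt hpz)) (Set.right_mem_Icc.2 (le_of_lt hpz)) hpz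
      rw [hW'z] at this
      exact absurd (hIooneg p ⟨hpxs, hpz⟩) (not_lt.2 (le_of_lt this))
  refine ⟨xs, hxs0, ?_, hxs_gt, hxs_lt, hleft, hright⟩
  intro y hy
  rcases lt_trichotomy y xs with h | h | h
  · exact absurd hy (ne_of_gt (hleft y h))
  · exact h
  · exact absurd hy (ne_of_lt (hright y h))
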